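/- Let w be a word with exactly m blocks. Then for every fixed k ≥ 1, the number of distinct Parikh vectors P(u) arising from fragments of w of the form uv with |u| = |v| = k and P(u) = P(v) is at most m. That is, w contains at most m Abelian-nonequivalent Abelian squares of any fixed length 2k. -/

import Mathlib

/-- The number of blocks (maximal uniform fragments) of a word, i.e., the length of its
run-length encoding: obtained by collapsing adjacent equal letters. -/
def numBlocks {α : Type*} [DecidableEq α] (w : List α) : ℕ :=
  (w.destutter (· ≠ ·)).length

namespace AbSqAux

variable {α : Type*} [DecidableEq α]

/-- number of boundaries (adjacent unequal pairs) -/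
def cb : List α → ℕ
  | [] => 0
  | [_] => 0
  | a :: b :: l => (if a = b then 0 else 1) + cb (b :: l)

lemma cb_cons_cons (a b : α) (l : List α) :
    cb (a :: b :: l) = (if a = b then 0 else 1) + cb (b :: l) := rfl

lemma numBlocks_cons_eq (a : α) (l : List α) : numBlocks (a :: l) = cb (a :: l) + 1 := by
  induction l generalizing a with
  | nil => simp [numBlocks, cb, List.destutter]
  | cons b l ih =>
    rw [cb_cons_cons]
    by_cases h : a = b
    · subst h
      have : numBlocks (a :: a :: l) = numBlocks (a :: l) := by
        simp [numBlocks, List.destutter_cons_cons, List.destutter]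
      rw [this, ih, if_pos rfl]
      omega
    · have : numBlocks (a :: b :: l) = numBlocks (b :: l) + 1 := by
        simp only [numBlocks, List.destutter_cons_cons]
        rw [if_pos h]
        simp [List.destutter]
      rw [this, ih, if_neg h]
      omega

lemma cb_tail_le (a : α) (l : List α) : cb l ≤ cb (a :: l) := by
  cases l with
  | nil => simp [cb]
  | cons b l => rw [cb_cons_cons]; exact Nat.le_add_left _ _

lemma cb_drop_succ_le (w : List α) (t : ℕ) : cb (w.drop (t + 1)) ≤ cb (w.drop t) := by
  by_cases h : t < w.length
  · rw [List.drop_eq_getElem_cons h]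
    exact cb_tail_le _ _
  · rw [List.drop_eq_nil_of_le (by omega), List.drop_eq_nil_of_le (by omega)]

lemma cb_drop_mono (w : List α) {p q : ℕ} (h : p ≤ q) :
    cb (w.drop q) ≤ cb (w.drop p) := by
  induction q with
  | zero =>
    obtain rfl : p = 0 := Nat.le_zero.mp h
    exact le_rfl
  | succ q ih =>
    rcases Nat.lt_or_ge p (q+1) with h' | h'
    · exact le_trans (cb_drop_succ_le w q) (ih (by omega))
    · have : p = q + 1 := by omega
      subst this; rfl

lemma cb_drop_step (w : List α) {t : ℕ} (h : t + 1 < w.length) :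
    cb (w.drop t) = (if w[t] = w[t+1] then 0 else 1) + cb (w.drop (t + 1)) := by
  rw [List.drop_eq_getElem_cons (show t < w.length by omega)]
  rw [List.drop_eq_getElem_cons h, cb_cons_cons, ← List.drop_eq_getElem_cons h]

/-- If the boundary counts at `p` and `q` agree, the word is constant on `[p, q]`. -/
lemma const_of_cb_eq (w : List α) {p q t : ℕ} (heq : cb (w.drop p) = cb (w.drop q))
    (hpt : p ≤ t) (htq : t + 1 ≤ q) (hlen : t + 1 < w.length) :
    w[t]'(by omega) = w[t+1]'hlen := by
  by_contra hne
  have h1 := cb_drop_mono w hpt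
  have h2 := cb_drop_mono w htq
  have h3 := cb_drop_step w hlen
  rw [if_neg hne] at h3
  omega

/-- Parikh-vector exchange identity between shifted fragments. -/
lemma seg_eq (w : List α) (i k d : ℕ) :
    ((w.drop i).take d : Multiset α) + ((w.drop (i + d)).take k : Multiset α)
      = ((w.drop i).take k : Multiset α) + ((w.drop (i + k)).take d : Multiset α) := by
  have h1 : (w.drop i).take (d + k) = (w.drop i).take d ++ (w.drop (i + d)).take k := by
    rw [List.take_add, List.drop_drop]
  have h2 : (w.drop i).take (k + d) = (w.drop i).take k ++ (w.drop (i + k)).take d := by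
    rw [List.take_add, List.drop_drop]
  have h3 : (w.drop i).take (d + k) = (w.drop i).take (k + d) := by rw [Nat.add_comm]
  rw [h1, h2] at h3
  have := congrArg (fun l : List α => (l : Multiset α)) h3
  simpa using this

/-- Main combinatorial lemma: two abelian square positions with constant middle
segment have the same Parikh vector. -/
lemma square_eq_of_const (w : List α) (k i j : ℕ) (hk : 1 ≤ k) (hij : i ≤ j)
    (hi : i + 2 * k ≤ w.length) (hj : j + 2 * k ≤ w.length)
    (hfi : ((w.drop i).take k : Multiset α) = ((w.drop (i + k)).take k : Multiset α))
    (hfj : ((w.drop j).take k : Multiset α) = ((w.drop (j + k)).take k : Multiset α))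
    (hconst : ∀ t (h : t + 1 < w.length), i + k ≤ t → t + 1 < j + k →
      w[t]'(by omega) = w[t+1]'h) :
    ((w.drop i).take k : Multiset α) = ((w.drop j).take k : Multiset α) := by
  set d := j - i with hd
  have hik : i + k < w.length := by omega
  set a := w[i + k] with ha
  -- every letter in positions [i+k, j+k) equals a
  have chain : ∀ s, s < d → ∀ (h : i + k + s < w.length), w[i + k + s] = a := by
    intro s
    induction s with
    | zero =>
      intro _ h
      exact rfl
    | succ s ih =>
      intro hs h
      have h1 : i + k + s + 1 < w.length := by omega
      have := hconst (i + k + s) h1 (by omega) (by omega)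
      have h2 : w[i + k + (s+1)]'h = w[i + k + s + 1]'h1 := rfl
      rw [h2, ← this]
      exact ih (by omega) (by omega)
  -- middle segment is constant
  have hM : ((w.drop (i + k)).take d : Multiset α) = Multiset.replicate d a := by
    rw [Multiset.eq_replicate]
    constructor
    · simp only [Multiset.coe_card, List.length_take, List.length_drop]
      omega
    · intro b hb
      rw [Multiset.mem_coe, List.mem_iff_getElem] at hb
      obtain ⟨s, hs, hbs⟩ := hb
      have hs' : s < d := by
        have := hs; simp only [List.length_take, List.length_drop] at this; omega
      rw [List.getElem_take, List.getElem_drop] at hbs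
      rw [← hbs]
      exact chain s hs' _
  have eq1 := seg_eq w i k d
  have eq2 := seg_eq w (i + k) k d
  have hjd : i + d = j := by omega
  rw [hjd] at eq1
  have h1 : i + k + d = j + k := by omega
  have h2 : i + k + k = i + 2 * k := by omega
  rw [h1, h2] at eq2
  -- eq2 : M + F(j+k) = F(i+k) + R ; rewrite squares
  rw [← hfi, ← hfj] at eq2
  -- counts
  have key : ∀ c, c ≠ a →
      Multiset.count c ((w.drop i).take d : Multiset α) = 0 ∧
      Multiset.count c ((w.drop j).take k : Multiset α)
        = Multiset.count c ((w.drop i).take k : Multiset α) := by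
    intro c hc
    have c1 := congrArg (Multiset.count c) eq1
    have c2 := congrArg (Multiset.count c) eq2
    simp only [Multiset.count_add] at c1 c2
    rw [hM, Multiset.count_replicate, if_neg (fun h => hc h.symm)] at c1 c2
    omega
  -- L is constant too
  have hL : ((w.drop i).take d : Multiset α) = Multiset.replicate d a := by
    rw [Multiset.eq_replicate]
    constructor
    · simp only [Multiset.coe_card, List.length_take, List.length_drop]
      omega
    · intro b hb
      by_contra hba
      have h0 := (key b hba).1
      rw [Multiset.count_eq_zero] at h0
      exact h0 hb
  ext c
  by_cases hc : c = a
  · have c1 := congrArg (Multiset.count c) eq1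
    simp only [Multiset.count_add] at c1
    rw [hM, hL, Multiset.count_replicate, if_pos hc.symm] at c1
    omega
  · exact ((key c hc).2).symm

end AbSqAux

open AbSqAux in
/-- A word `w` with exactly `m` blocks contains, for every fixed `k ≥ 1`, at most `m`
distinct Parikh vectors `P(u)` arising from fragments of `w` of the form `u ++ v` with
`|u| = |v| = k` and `P(u) = P(v)`; that is, `w` contains at most `m` Abelian-nonequivalent
Abelian squares of any fixed length `2k`. -/
theorem abelian_nonequivalent_squares_fixed_length_le_blocks {α : Type*} [DecidableEq α]
    (w : List α) (m k : ℕ) (hm : numBlocks w = m) (hk : 1 ≤ k) :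
    {P : Multiset α | ∃ x u v y : List α, w = x ++ u ++ v ++ y ∧
        u.length = k ∧ v.length = k ∧
        (u : Multiset α) = (v : Multiset α) ∧ (u : Multiset α) = P}.ncard ≤ m := by
  classical
  set S := {P : Multiset α | ∃ x u v y : List α, w = x ++ u ++ v ++ y ∧
        u.length = k ∧ v.length = k ∧
        (u : Multiset α) = (v : Multiset α) ∧ (u : Multiset α) = P} with hS
  -- the square predicate
  set sq : ℕ → Multiset α → Prop := fun i P => i + 2 * k ≤ w.length ∧
      ((w.drop i).take k : Multiset α) = ((w.drop (i + k)).take k : Multiset α) ∧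
      ((w.drop i).take k : Multiset α) = P with hsq
  have hex : ∀ P ∈ S, ∃ i, sq i P := by
    rintro P ⟨x, u, v, y, hw, hu, hv, huv, huP⟩
    refine ⟨x.length, ?_, ?_, ?_⟩
    · have := congrArg List.length hw
      simp [List.length_append] at this
      omega
    · have hdu : w.drop x.length = u ++ (v ++ y) := by
        calc w.drop x.length
            = ((x ++ (u ++ (v ++ y)))).drop x.length := by rw [hw]; simp [List.append_assoc]
          _ = u ++ (v ++ y) := List.drop_left
      have hdv : w.drop (x.length + k) = v ++ y := by
        have : x.length + k = (x ++ u).length := by simp [hu]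
        rw [this, hw]
        calc (x ++ u ++ v ++ y).drop (x ++ u).length
            = ((x ++ u) ++ (v ++ y)).drop (x ++ u).length := by simp [List.append_assoc]
          _ = v ++ y := List.drop_left
      rw [hdu, hdv, List.take_left' hu, List.take_left' hv]
      exact huv
    · have hdu : w.drop x.length = u ++ (v ++ y) := by
        calc w.drop x.length
            = ((x ++ (u ++ (v ++ y)))).drop x.length := by rw [hw]; simp [List.append_assoc]
          _ = u ++ (v ++ y) := List.drop_left
      rw [hdu, List.take_left' hu]
      exact huP
  -- the map to boundary counts
  set φ : Multiset α → ℕ := fun P =>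
    if h : ∃ i, sq i P then cb (w.drop (Nat.find h + k)) else 0 with hφ
  have main : ∀ (P Q : Multiset α) (hP : ∃ i, sq i P) (hQ : ∃ i, sq i Q),
      Nat.find hP ≤ Nat.find hQ →
      cb (w.drop (Nat.find hP + k)) = cb (w.drop (Nat.find hQ + k)) → P = Q := by
    intro P Q hP hQ hle hcb
    set i := Nat.find hP with hi
    set j := Nat.find hQ with hj
    have hPs : sq i P := Nat.find_spec hP
    have hQs : sq j Q := Nat.find_spec hQ
    obtain ⟨hi2, hfi, hiP⟩ := hPs
    obtain ⟨hj2, hfj, hjQ⟩ := hQs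
    rw [← hiP, ← hjQ]
    refine square_eq_of_const w k i j hk hle hi2 hj2 hfi hfj ?_
    intro t h hit htj
    exact const_of_cb_eq w hcb hit (by omega) h
  have hinj : Set.InjOn φ S := by
    intro P hP Q hQ hPQ
    have hPex := hex P hP
    have hQex := hex Q hQ
    rw [hφ] at hPQ
    simp only [dif_pos hPex, dif_pos hQex] at hPQ
    rcases le_total (Nat.find hPex) (Nat.find hQex) with h | h
    · exact main P Q hPex hQex h hPQ
    · exact (main Q P hQex hPex h hPQ.symm).symm
  have hmaps : ∀ P ∈ S, φ P ∈ (↑(Finset.range m) : Set ℕ) := by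
    intro P hP
    have hPex := hex P hP
    obtain ⟨i0, hi0, _, _⟩ := hPex
    -- w is nonempty
    have hwlen : 1 ≤ w.length := by omega
    obtain ⟨a, l, hal⟩ : ∃ a l, w = a :: l := by
      cases w with
      | nil => simp at hwlen
      | cons a l => exact ⟨a, l, rfl⟩
    have hmb : cb w + 1 = m := by rw [← hm, hal, numBlocks_cons_eq]
    simp only [Finset.coe_range, Set.mem_Iio]
    have h5 : φ P = cb (w.drop (Nat.find (hex P hP) + k)) := dif_pos (hex P hP)
    rw [h5]
    have := cb_drop_mono w (show 0 ≤ Nat.find (hex P hP) + k by omega)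
    simp only [List.drop_zero] at this
    omega
  calc S.ncard ≤ (↑(Finset.range m) : Set ℕ).ncard :=
        Set.ncard_le_ncard_of_injOn φ hmaps hinj (Finset.finite_toSet _)
    _ = m := by rw [Set.ncard_coe_finset, Finset.card_range]
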